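/- Let a and b be distinct, relatively prime integers greater than 1, let S = {ai + bj : i, j ∈ ℕ}, and let f_A(q) = Σ_{n ∉ S} q^n be the (polynomial) generating function of the gaps of S. Then (q^a - 1)(q^b - 1)((q - 1) f_A(q) + 1) = (q - 1)(q^{ab} - 1) as polynomials (say over ℚ or over any commutative ring). -/

import Mathlib

open Polynomial
open scoped Classical

private lemma apery (a b : ℕ) (hb : 0 < b) {n : ℕ} (h : ∃ i j : ℕ, n = a * i + b * j) :
    ∃ i, i < b ∧ ∃ j, n = a * i + b * j := by
  obtain ⟨i, j, rfl⟩ := h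
  refine ⟨i % b, Nat.mod_lt _ hb, j + a * (i / b), ?_⟩
  nlinarith [Nat.div_add_mod i b]

private lemma gap_lemma (a b : ℕ) (ha0 : 0 < a) (hb0 : 0 < b) (hcop : Nat.Coprime a b)
    {i i' j' : ℕ} (hi : i < b) (heq : a * i = a * i' + b * j' + b) : False := by
  have h1 : a * i' < a * i := by omega
  have hii' : i' < i := Nat.lt_of_mul_lt_mul_left h1
  have h3 : a * i = a * i' + a * (i - i') := by
    rw [← Nat.mul_add]
    congr 1
    omega
  have hdvd : b ∣ (i - i') * a := by
    refine ⟨j' + 1, ?_⟩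
    rw [mul_add_one, mul_comm (i - i') a]
    omega
  have hb_dvd : b ∣ (i - i') := (Nat.Coprime.dvd_of_dvd_mul_right hcop.symm hdvd)
  have hle := Nat.le_of_dvd (by omega) hb_dvd
  omega

private lemma key_series (a b : ℕ) (ha : 2 ≤ a) (hb : 2 ≤ b) (hcop : Nat.Coprime a b) :
    (1 - PowerSeries.X ^ b) *
        PowerSeries.mk (fun n => if ∃ i j : ℕ, n = a * i + b * j then (1 : ℚ) else 0) =
      ∑ i ∈ Finset.range b, (PowerSeries.X : PowerSeries ℚ) ^ (a * i) := by
  have ha0 : 0 < a := by omega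
  have hb0 : 0 < b := by omega
  ext n
  rw [sub_mul, one_mul, map_sub, map_sum, PowerSeries.coeff_mk, PowerSeries.coeff_X_pow_mul']
  have hRHS : (∑ i ∈ Finset.range b, (PowerSeries.coeff n) ((PowerSeries.X : PowerSeries ℚ) ^ (a * i))) =
      if ∃ i, i < b ∧ n = a * i then 1 else 0 := by
    simp_rw [PowerSeries.coeff_X_pow]
    by_cases hex : ∃ i, i < b ∧ n = a * i
    · obtain ⟨i, hi, rfl⟩ := hex
      rw [if_pos ⟨i, hi, rfl⟩, Finset.sum_eq_single_of_mem i (Finset.mem_range.2 hi)]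
      · exact if_pos rfl
      · intro j _ hj
        exact if_neg (fun h => hj (Nat.eq_of_mul_eq_mul_left ha0 h.symm))
    · rw [if_neg hex, Finset.sum_eq_zero]
      intro i hii
      exact if_neg (fun h => hex ⟨i, Finset.mem_range.1 hii, h⟩)
  rw [hRHS]
  by_cases hex : ∃ i, i < b ∧ n = a * i
  · obtain ⟨i, hi, rfl⟩ := hex
    rw [if_pos (show ∃ i' j' : ℕ, a * i = a * i' + b * j' from ⟨i, 0, by ring⟩)]
    have h2 : (if b ≤ a * i then
        (PowerSeries.coeff (a * i - b)) (PowerSeries.mk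
          (fun n => if ∃ i j : ℕ, n = a * i + b * j then (1 : ℚ) else 0)) else 0) = 0 := by
      split_ifs with hble
      · rw [PowerSeries.coeff_mk, if_neg]
        rintro ⟨i', j', heq⟩
        exact gap_lemma a b ha0 hb0 hcop (i' := i') (j' := j') hi (by omega)
      · rfl
    rw [h2, sub_zero, if_pos ⟨i, hi, rfl⟩]
  · rw [if_neg hex]
    by_cases hbn : b ≤ n
    · rw [if_pos hbn, PowerSeries.coeff_mk]
      have hiff : (∃ i j : ℕ, n = a * i + b * j) ↔ (∃ i j : ℕ, n - b = a * i + b * j) := by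
        constructor
        · intro h
          obtain ⟨i, hi, j, hij⟩ := apery a b hb0 h
          rcases j with _ | j
          · exact absurd ⟨i, hi, by omega⟩ hex
          · refine ⟨i, j, ?_⟩
            have : b * (j + 1) = b * j + b := by ring
            omega
        · rintro ⟨i, j, hij⟩
          refine ⟨i, j + 1, ?_⟩
          have : b * (j + 1) = b * j + b := by ring
          omega
      simp only [hiff]
      exact sub_self _
    · rw [if_neg hbn, sub_zero, if_neg]
      intro h
      obtain ⟨i, hi, j, hij⟩ := apery a b hb0 h
      rcases j with _ | j
      · exact hex ⟨i, hi, by omega⟩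
      · have : b * (j + 1) = b * j + b := by ring
        omega

theorem stmt_7 (a b : ℕ) (ha : 2 ≤ a) (hb : 2 ≤ b) (hab : a ≠ b) (hcop : Nat.Coprime a b)
    (hfin : {n : ℕ | ¬ ∃ i j : ℕ, n = a * i + b * j}.Finite) :
    (X ^ a - 1) * (X ^ b - 1) *
        ((X - 1) * (∑ n ∈ hfin.toFinset, (X : ℚ[X]) ^ n) + 1) =
      (X - 1) * (X ^ (a * b) - 1) := by
  apply Polynomial.coe_injective ℚ
  rw [show ((↑) : ℚ[X] → PowerSeries ℚ) = Polynomial.coeToPowerSeries.ringHom from rfl]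
  simp only [map_mul, map_sub, map_add, map_pow, map_one, map_sum,
    Polynomial.coeToPowerSeries.ringHom_apply, Polynomial.coe_X]
  set Sser : PowerSeries ℚ :=
    PowerSeries.mk (fun n => if ∃ i j : ℕ, n = a * i + b * j then (1 : ℚ) else 0) with hS
  set o : PowerSeries ℚ := PowerSeries.mk (fun _ => (1 : ℚ)) with ho
  have hG : (∑ n ∈ hfin.toFinset, (PowerSeries.X : PowerSeries ℚ) ^ n) = o - Sser := by
    ext n
    rw [map_sum, map_sub, hS, ho, PowerSeries.coeff_mk, PowerSeries.coeff_mk]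
    simp_rw [PowerSeries.coeff_X_pow]
    rw [Finset.sum_ite_eq hfin.toFinset n (fun _ => (1 : ℚ))]
    simp only [Set.Finite.mem_toFinset, Set.mem_setOf_eq]
    by_cases hn : ∃ i j : ℕ, n = a * i + b * j
    · rw [if_neg (by simpa using hn), if_pos hn]; ring
    · rw [if_pos hn, if_neg hn]; ring
  have hB : (1 - PowerSeries.X) * o = 1 := by
    ext n
    rw [sub_mul, one_mul, map_sub,
      show (PowerSeries.X : PowerSeries ℚ) = PowerSeries.X ^ 1 from (pow_one _).symm,
      PowerSeries.coeff_X_pow_mul', ho, PowerSeries.coeff_mk, PowerSeries.coeff_one]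
    rcases n with _ | n <;> simp
  have hC : (1 - PowerSeries.X ^ a) * ((1 - PowerSeries.X ^ b) * Sser) =
      1 - PowerSeries.X ^ (a * b) := by
    rw [hS, key_series a b ha hb hcop]
    have h := mul_geom_sum ((PowerSeries.X : PowerSeries ℚ) ^ a) b
    simp_rw [pow_mul]
    linear_combination (-1 : PowerSeries ℚ) * h
  rw [hG]
  linear_combination (-((PowerSeries.X : PowerSeries ℚ) ^ a - 1) * (PowerSeries.X ^ b - 1)) * hB +
    (-((PowerSeries.X : PowerSeries ℚ) - 1)) * hC
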